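/- Let f be n-times continuously differentiable on [a, b] with f^(n)(x) ≥ 0 for all x ∈ [a, b], and fix x_k ∈ [a, b). Define g_0 = f and g_m(x) = (g_{m-1}(x) - g_{m-1}(x_k))/(x - x_k) for x ≠ x_k, extended continuously at x_k. Then g_{n-1}(x) ≥ g_{n-1}(x_k) for all x ∈ [x_k, b], i.e. g_{n-1} attains its minimum on [x_k, b] at x_k. -/

import Mathlib

noncomputable def divDiff (f : ℝ → ℝ) (xk a b : ℝ) : ℕ → ℝ → ℝ
  | 0 => f
  | m + 1 => fun x =>
      if x = xk then iteratedDerivWithin (m + 1) f (Set.Icc a b) xk / Nat.factorial (m + 1)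
      else (divDiff f xk a b m x - divDiff f xk a b m xk) / (x - xk)

open Set

lemma iteratedDerivWithin_subset_eq {f : ℝ → ℝ} {s t : Set ℝ} (hst : s ⊆ t)
    (hs : UniqueDiffOn ℝ s) (ht : UniqueDiffOn ℝ t) {n : ℕ} (hf : ContDiffOn ℝ n f t) :
    ∀ m, m ≤ n → ∀ y ∈ s, iteratedDerivWithin m f s y = iteratedDerivWithin m f t y := by
  intro m
  induction m with
  | zero => simp [iteratedDerivWithin_zero]
  | succ m ih =>
    intro hm y hy
    have hm' : m < n := hm
    rw [iteratedDerivWithin_succ, iteratedDerivWithin_succ]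
    rw [derivWithin_congr (fun z hz => ih hm'.le z hz) (ih hm'.le y hy)]
    exact derivWithin_subset hst (hs y hy)
      ((hf.differentiableOn_iteratedDerivWithin (by exact_mod_cast hm') ht) y (hst hy))

lemma taylor_remainder_nonneg (f : ℝ → ℝ) (a b xk : ℝ) (m : ℕ)
    (hf : ContDiffOn ℝ ((m + 1 : ℕ) : ℕ∞) f (Set.Icc a b))
    (hpos : ∀ x ∈ Set.Icc a b, 0 ≤ iteratedDerivWithin (m + 1) f (Set.Icc a b) x)
    (hxk : xk ∈ Set.Ico a b) {x : ℝ} (hx : xk < x) (hxb : x ≤ b) :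
    0 ≤ f x - taylorWithinEval f m (Set.Icc a b) xk x := by
  have hab : a < b := lt_of_le_of_lt hxk.1 hxk.2
  have hsub : Icc xk x ⊆ Icc a b := Icc_subset_Icc hxk.1 hxb
  have uds : UniqueDiffOn ℝ (Icc xk x) := uniqueDiffOn_Icc hx
  have udt : UniqueDiffOn ℝ (Icc a b) := uniqueDiffOn_Icc hab
  have hcongr := iteratedDerivWithin_subset_eq (n := m + 1) hsub uds udt (by exact_mod_cast hf)
  have hf1 : ContDiffOn ℝ (m : ℕ∞) f (Icc xk x) :=
    (hf.of_le (by exact_mod_cast Nat.le_succ m)).mono hsub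
  have hdiffG : DifferentiableOn ℝ (iteratedDerivWithin m f (Icc a b)) (Icc a b) :=
    hf.differentiableOn_iteratedDerivWithin (by exact_mod_cast Nat.lt_succ_self m) udt
  have hdiff : DifferentiableOn ℝ (iteratedDerivWithin m f (Icc xk x)) (Ioo xk x) := by
    refine (hdiffG.mono (fun y hy => hsub (Ioo_subset_Icc_self hy))).congr ?_
    intro y hy
    exact hcongr m (Nat.le_succ m) y (Ioo_subset_Icc_self hy)
  obtain ⟨x', hx', heq⟩ := taylor_mean_remainder_lagrange hx.ne
    (by rwa [uIcc_of_le hx.le]) (by rwa [uIcc_of_le hx.le, uIoo_of_le hx.le])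
  rw [uIcc_of_le hx.le] at heq
  rw [uIoo_of_le hx.le] at hx'
  have hT : taylorWithinEval f m (Icc xk x) xk x = taylorWithinEval f m (Icc a b) xk x := by
    rw [taylor_within_apply, taylor_within_apply]
    refine Finset.sum_congr rfl fun j hj => ?_
    rw [hcongr j (by have := Finset.mem_range.1 hj; omega) xk (left_mem_Icc.2 hx.le)]
  have hd : iteratedDerivWithin (m + 1) f (Icc xk x) x' =
      iteratedDerivWithin (m + 1) f (Icc a b) x' :=
    hcongr (m + 1) le_rfl x' (Ioo_subset_Icc_self hx')
  rw [hT, hd] at heq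
  rw [heq]
  have h1 : 0 ≤ iteratedDerivWithin (m + 1) f (Icc a b) x' :=
    hpos x' (hsub (Ioo_subset_Icc_self hx'))
  have h2 : (0:ℝ) ≤ (x - xk) ^ (m + 1) := le_of_lt (pow_pos (sub_pos.2 hx) _)
  positivity

lemma divDiff_eq (f : ℝ → ℝ) (a b xk : ℝ) (m : ℕ) {x : ℝ} (hx : x ≠ xk) :
    divDiff f xk a b (m + 1) x =
      (f x - taylorWithinEval f m (Set.Icc a b) xk x) / (x - xk) ^ (m + 1) := by
  induction m with
  | zero =>
    simp [divDiff, hx]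
  | succ m ih =>
    have hne : x - xk ≠ 0 := sub_ne_zero.2 hx
    have hLk : divDiff f xk a b (m + 1) xk =
        iteratedDerivWithin (m + 1) f (Set.Icc a b) xk / Nat.factorial (m + 1) := by
      simp [divDiff]
    have hunfold : divDiff f xk a b (m + 1 + 1) x =
        (divDiff f xk a b (m + 1) x - divDiff f xk a b (m + 1) xk) / (x - xk) := by
      rw [divDiff]; simp only [if_neg hx]
    rw [hunfold, ih, hLk, taylorWithinEval_succ, smul_eq_mul]
    have hfac : ((m + 1).factorial : ℝ) = (m + 1 : ℝ) * (m.factorial : ℝ) := by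
      rw [Nat.factorial_succ]; push_cast; ring
    rw [hfac]
    have hfne : ((m:ℝ) + 1) * (m.factorial : ℝ) ≠ 0 := by positivity
    field_simp
    ring

theorem recursive_lga_terminates (f : ℝ → ℝ) (a b xk : ℝ) (n : ℕ) (hn : 1 ≤ n)
    (hf : ContDiffOn ℝ n f (Set.Icc a b))
    (hpos : ∀ x ∈ Set.Icc a b, 0 ≤ iteratedDerivWithin n f (Set.Icc a b) x)
    (hxk : xk ∈ Set.Ico a b) :
    ∀ x ∈ Set.Icc xk b, divDiff f xk a b (n - 1) xk ≤ divDiff f xk a b (n - 1) x := by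
  intro x hx
  rcases eq_or_lt_of_le hx.1 with rfl | hlt
  · exact le_refl _
  · have hxb : x ≤ b := hx.2
    match n, hn with
    | 1, _ =>
      have h := taylor_remainder_nonneg f a b xk 0 (by exact_mod_cast hf) hpos hxk hlt hxb
      rw [taylor_within_zero_eval] at h
      show f xk ≤ f x
      linarith
    | (m + 2), _ =>
      show divDiff f xk a b (m + 1) xk ≤ divDiff f xk a b (m + 1) x
      have hLk : divDiff f xk a b (m + 1) xk =
          iteratedDerivWithin (m + 1) f (Set.Icc a b) xk / Nat.factorial (m + 1) := by
        simp [divDiff]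
      rw [hLk, divDiff_eq f a b xk m (ne_of_gt hlt)]
      have hpow : (0:ℝ) < (x - xk) ^ (m + 1) := pow_pos (sub_pos.2 hlt) _
      rw [div_le_div_iff₀ (by positivity) hpow]
      have h := taylor_remainder_nonneg f a b xk (m + 1) (by exact_mod_cast hf)
        (by exact_mod_cast hpos) hxk hlt hxb
      rw [taylorWithinEval_succ, smul_eq_mul] at h
      have hfac : ((m + 1).factorial : ℝ) = (m + 1 : ℝ) * (m.factorial : ℝ) := by
        rw [Nat.factorial_succ]; push_cast; ring
      have hfne : ((m:ℝ) + 1) * (m.factorial : ℝ) ≠ 0 := by positivity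
      rw [hfac]
      set D := iteratedDerivWithin (m + 1) f (Set.Icc a b) xk with hD
      set T := taylorWithinEval f m (Set.Icc a b) xk x with hT
      have hfpos : (0:ℝ) < ((m:ℝ) + 1) * (m.factorial : ℝ) := by positivity
      have h2 : (((m:ℝ) + 1) * (m.factorial : ℝ))⁻¹ * (x - xk) ^ (m + 1) * D ≤ f x - T := by
        push_cast at h ⊢
        linarith
      calc D * (x - xk) ^ (m + 1)
          = ((((m:ℝ) + 1) * (m.factorial : ℝ))⁻¹ * (x - xk) ^ (m + 1) * D) *
            (((m:ℝ) + 1) * (m.factorial : ℝ)) := by field_simp <;> ring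
        _ ≤ (f x - T) * (((m:ℝ) + 1) * (m.factorial : ℝ)) :=
            mul_le_mul_of_nonneg_right h2 hfpos.le
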